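/- Let A and B be n×n complex Hermitian matrices with ‖A‖ ≤ 1 (ℓ²→ℓ² operator norm), let t be a real number with |t| ≤ 1, and let ρ be an n×n positive semidefinite complex matrix with trace 1. Then |Tr(exp(itA)·B·exp(−itA)·ρ) − Tr(B·ρ) − t·Tr(i(AB − BA)·ρ)| ≤ t² · ‖AB − BA‖ · (e² − 3)/2. -/

import Mathlib

open scoped Matrix.Norms.L2Operator ComplexOrder

set_option maxHeartbeats 1000000

namespace TraceConjAux

open NormedSpace Matrix Set

variable {n : ℕ}

lemma expR_eq (x : Matrix (Fin n) (Fin n) ℂ) :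
    NormedSpace.exp x = NormedSpace.exp x :=
  rfl

lemma norm_exp_skew [NeZero n] (x : Matrix (Fin n) (Fin n) ℂ) (hx : xᴴ = -x) :
    ‖NormedSpace.exp x‖ = 1 := by
  letI : NormedAlgebra ℚ (Matrix (Fin n) (Fin n) ℂ) := .restrictScalars ℚ ℂ _
  exact CStarRing.norm_of_mem_unitary
    (NormedSpace.exp_mem_unitary_of_mem_skewAdjoint (skewAdjoint.mem_iff.mpr hx))

lemma skew_smul (x : Matrix (Fin n) (Fin n) ℂ) (hx : xᴴ = -x) (v : ℝ) :
    (v • x)ᴴ = -(v • x) := by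
  rw [Matrix.conjTranspose_smul, star_trivial, hx, smul_neg]

lemma hasDerivAt_conj (x M₀ : Matrix (Fin n) (Fin n) ℂ) (u : ℝ) :
    HasDerivAt (fun v : ℝ => NormedSpace.exp (v • x) * M₀ * NormedSpace.exp (-(v • x)))
      (NormedSpace.exp (u • x) * (x * M₀ - M₀ * x) * NormedSpace.exp (-(u • x))) u := by
  have h1 : HasDerivAt (fun v : ℝ => NormedSpace.exp (v • x))
      (NormedSpace.exp (u • x) * x) u := by
    simpa only [expR_eq] using hasDerivAt_exp_smul_const (𝕂 := ℝ) x u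
  have h2 : HasDerivAt (fun v : ℝ => NormedSpace.exp (-(v • x)))
      (NormedSpace.exp (-(u • x)) * (-x)) u := by
    simpa only [expR_eq, smul_neg] using hasDerivAt_exp_smul_const (𝕂 := ℝ) (-x) u
  have h3 := (h1.mul_const M₀).mul h2
  refine h3.congr_deriv ?_
  have hc : NormedSpace.exp (-(u • x)) * x = x * NormedSpace.exp (-(u • x)) :=
    ((((Commute.refl x).smul_right u).neg_right).exp_right).eq.symm
  rw [show NormedSpace.exp (-(u • x)) * (-x) = -(x * NormedSpace.exp (-(u • x))) by
    rw [mul_neg, hc]]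
  noncomm_ring

lemma conj_sub_le [NeZero n] (x M₀ : Matrix (Fin n) (Fin n) ℂ) (hx : xᴴ = -x) :
    ‖NormedSpace.exp x * M₀ * NormedSpace.exp (-x) - M₀‖ ≤ 2 * ‖x‖ * ‖M₀‖ := by
  have hF : ∀ v ∈ Icc (0:ℝ) 1, HasDerivWithinAt
      (fun v : ℝ => NormedSpace.exp (v • x) * M₀ * NormedSpace.exp (-(v • x)))
      (NormedSpace.exp (v • x) * (x * M₀ - M₀ * x) * NormedSpace.exp (-(v • x)))
      (Icc (0:ℝ) 1) v :=
    fun v _ => (hasDerivAt_conj x M₀ v).hasDerivWithinAt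
  have hbound : ∀ v ∈ Ico (0:ℝ) 1,
      ‖NormedSpace.exp (v • x) * (x * M₀ - M₀ * x) * NormedSpace.exp (-(v • x))‖
        ≤ 2 * ‖x‖ * ‖M₀‖ := by
    intro v _
    have e1 : ‖NormedSpace.exp (v • x)‖ = 1 := norm_exp_skew _ (skew_smul x hx v)
    have e2 : ‖NormedSpace.exp (-(v • x))‖ = 1 := by
      refine norm_exp_skew _ ?_
      rw [Matrix.conjTranspose_neg, skew_smul x hx v, neg_neg]
    calc ‖NormedSpace.exp (v • x) * (x * M₀ - M₀ * x) * NormedSpace.exp (-(v • x))‖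
        ≤ ‖NormedSpace.exp (v • x) * (x * M₀ - M₀ * x)‖ * ‖NormedSpace.exp (-(v • x))‖ :=
          norm_mul_le _ _
      _ ≤ ‖NormedSpace.exp (v • x)‖ * ‖x * M₀ - M₀ * x‖ * ‖NormedSpace.exp (-(v • x))‖ :=
          mul_le_mul_of_nonneg_right (norm_mul_le _ _) (norm_nonneg _)
      _ = ‖x * M₀ - M₀ * x‖ := by rw [e1, e2]; ring
      _ ≤ ‖x * M₀‖ + ‖M₀ * x‖ := norm_sub_le _ _
      _ ≤ ‖x‖ * ‖M₀‖ + ‖M₀‖ * ‖x‖ := add_le_add (norm_mul_le _ _) (norm_mul_le _ _)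
      _ = 2 * ‖x‖ * ‖M₀‖ := by ring
  have h := norm_image_sub_le_of_norm_deriv_le_segment_01' hF hbound
  simpa [neg_zero, NormedSpace.exp_zero] using h

lemma key_bound [NeZero n] (x B : Matrix (Fin n) (Fin n) ℂ) (hx : xᴴ = -x) :
    ‖NormedSpace.exp x * B * NormedSpace.exp (-x) - B - (x * B - B * x)‖
      ≤ 2 * ‖x‖ * ‖x * B - B * x‖ := by
  set C := x * B - B * x with hC
  have hG : ∀ v ∈ Icc (0:ℝ) 1, HasDerivWithinAt
      (fun v : ℝ => NormedSpace.exp (v • x) * B * NormedSpace.exp (-(v • x)) - v • C)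
      (NormedSpace.exp (v • x) * C * NormedSpace.exp (-(v • x)) - C) (Icc (0:ℝ) 1) v := by
    intro v _
    have h := (hasDerivAt_conj x B v).sub ((hasDerivAt_id v).smul_const C)
    exact h.hasDerivWithinAt.congr_deriv (by simp [hC])
  have hbound : ∀ v ∈ Ico (0:ℝ) 1,
      ‖NormedSpace.exp (v • x) * C * NormedSpace.exp (-(v • x)) - C‖ ≤ 2 * ‖x‖ * ‖C‖ := by
    intro v hv
    have h := conj_sub_le (v • x) C (skew_smul x hx v)
    have hv1 : ‖v • x‖ ≤ ‖x‖ := by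
      rw [norm_smul]
      calc ‖v‖ * ‖x‖ ≤ 1 * ‖x‖ := by
            apply mul_le_mul_of_nonneg_right _ (norm_nonneg x)
            rw [Real.norm_eq_abs, abs_of_nonneg hv.1]
            exact hv.2.le
        _ = ‖x‖ := one_mul _
    refine h.trans ?_
    have := norm_nonneg C
    nlinarith [norm_nonneg x]
  have h := norm_image_sub_le_of_norm_deriv_le_segment_01' hG hbound
  simp only [one_smul, zero_smul, neg_zero, NormedSpace.exp_zero, one_mul, mul_one,
    sub_zero] at h
  calc ‖NormedSpace.exp x * B * NormedSpace.exp (-x) - B - C‖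
      = ‖NormedSpace.exp x * B * NormedSpace.exp (-x) - C - B‖ := by
        rw [sub_right_comm]
    _ ≤ 2 * ‖x‖ * ‖C‖ := h

lemma trace_bound (M₀ ρ : Matrix (Fin n) (Fin n) ℂ) (hρ : ρ.PosSemidef)
    (hρtr : ρ.trace = 1) : ‖(M₀ * ρ).trace‖ ≤ ‖M₀‖ := by
  obtain ⟨Q, hQH, hQQ⟩ : ∃ Q : Matrix (Fin n) (Fin n) ℂ, Qᴴ = Q ∧ Q * Q = ρ := by
    open MatrixOrder in
    exact ⟨CFC.sqrt ρ, (CFC.sqrt_nonneg ρ).posSemidef.1, CFC.sqrt_mul_sqrt_self ρ hρ.nonneg⟩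
  have hQij : ∀ i j, Q i j = star (Q j i) := by
    intro i j
    conv_lhs => rw [← hQH, Matrix.conjTranspose_apply]
  set v : Fin n → EuclideanSpace ℂ (Fin n) :=
    fun i => (EuclideanSpace.equiv (Fin n) ℂ).symm (fun j => Q j i) with hv
  have htr : (M₀ * ρ).trace = ∑ i, inner ℂ (v i)
      ((EuclideanSpace.equiv (Fin n) ℂ).symm (M₀ *ᵥ fun j => Q j i)) := by
    rw [← hQQ, ← mul_assoc, Matrix.trace_mul_comm]
    rw [Matrix.trace]
    refine Finset.sum_congr rfl fun i _ => ?_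
    simp only [Matrix.diag_apply, Matrix.mul_apply, PiLp.inner_apply, RCLike.inner_apply]
    refine Finset.sum_congr rfl fun j _ => ?_
    rw [hQij i j]
    exact mul_comm _ _
  have hnorm2 : ∑ i, ‖v i‖ ^ 2 = 1 := by
    have h1 : ∀ i, (‖v i‖ ^ 2 : ℝ) = ∑ j, ‖Q j i‖ ^ 2 := by
      intro i
      rw [EuclideanSpace.norm_eq, Real.sq_sqrt (Finset.sum_nonneg fun j _ => sq_nonneg _)]
      rfl
    have h2 : ρ.trace = ∑ i, ∑ j, ((‖Q j i‖ : ℂ) ^ 2) := by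
      rw [← hQQ, Matrix.trace]
      refine Finset.sum_congr rfl fun i _ => ?_
      simp only [Matrix.diag_apply, Matrix.mul_apply]
      refine Finset.sum_congr rfl fun j _ => ?_
      rw [hQij i j]
      have := RCLike.conj_mul (K := ℂ) (Q j i)
      simpa using this
    rw [h2] at hρtr
    have : ((∑ i, ∑ j, ‖Q j i‖ ^ 2 : ℝ) : ℂ) = 1 := by
      push_cast
      simpa using hρtr
    have hr : (∑ i, ∑ j, ‖Q j i‖ ^ 2 : ℝ) = 1 := by exact_mod_cast this
    rw [← hr]
    exact Finset.sum_congr rfl fun i _ => h1 i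
  rw [htr]
  calc norm (∑ i, inner ℂ (v i)
        ((EuclideanSpace.equiv (Fin n) ℂ).symm (M₀ *ᵥ fun j => Q j i)))
      ≤ ∑ i, norm (inner ℂ (v i)
        ((EuclideanSpace.equiv (Fin n) ℂ).symm (M₀ *ᵥ fun j => Q j i))) := by
        exact norm_sum_le _ _
    _ ≤ ∑ i, ‖M₀‖ * ‖v i‖ ^ 2 := by
        refine Finset.sum_le_sum fun i _ => ?_
        have h1 := norm_inner_le_norm (𝕜 := ℂ) (v i)
          ((EuclideanSpace.equiv (Fin n) ℂ).symm (M₀ *ᵥ fun j => Q j i))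
        have h2 : ‖(EuclideanSpace.equiv (Fin n) ℂ).symm (M₀ *ᵥ fun j => Q j i)‖
            ≤ ‖M₀‖ * ‖v i‖ := M₀.l2_opNorm_mulVec (v i)
        have h3 : norm (inner ℂ (v i)
            ((EuclideanSpace.equiv (Fin n) ℂ).symm (M₀ *ᵥ fun j => Q j i)))
            ≤ ‖v i‖ * (‖M₀‖ * ‖v i‖) := by
          refine le_trans ?_ (mul_le_mul_of_nonneg_left h2 (norm_nonneg _))
          exact h1
        calc norm (inner ℂ (v i)
              ((EuclideanSpace.equiv (Fin n) ℂ).symm (M₀ *ᵥ fun j => Q j i)))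
            ≤ ‖v i‖ * (‖M₀‖ * ‖v i‖) := h3
          _ = ‖M₀‖ * ‖v i‖ ^ 2 := by ring
    _ = ‖M₀‖ * ∑ i, ‖v i‖ ^ 2 := by rw [Finset.mul_sum]
    _ = ‖M₀‖ := by rw [hnorm2, mul_one]

end TraceConjAux

open Matrix TraceConjAux in
theorem trace_conjugation_perturbation_bound {n : ℕ}
    (A B ρ : Matrix (Fin n) (Fin n) ℂ)
    (hA : A.IsHermitian) (hB : B.IsHermitian) (hAnorm : ‖A‖ ≤ 1)
    (t : ℝ) (ht : |t| ≤ 1)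
    (hρ : ρ.PosSemidef) (hρtr : ρ.trace = 1) :
    ‖((NormedSpace.exp ((Complex.I * t) • A) * B *
            NormedSpace.exp (-((Complex.I * t) • A)) * ρ).trace
          - (B * ρ).trace - (t : ℂ) * (Complex.I • (A * B - B * A) * ρ).trace)‖
      ≤ t ^ 2 * ‖A * B - B * A‖ * ((Real.exp 1 ^ 2 - 3) / 2) := by
  have hn : n ≠ 0 := by
    rintro rfl
    rw [Matrix.trace] at hρtr
    simp at hρtr
  haveI : NeZero n := ⟨hn⟩
  set x : Matrix (Fin n) (Fin n) ℂ := (Complex.I * t) • A with hxdef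
  set C : Matrix (Fin n) (Fin n) ℂ := A * B - B * A with hCdef
  have hx : xᴴ = -x := by
    rw [hxdef, Matrix.conjTranspose_smul, hA.eq]
    rw [show star (Complex.I * (t : ℂ)) = -(Complex.I * t) by
      simp [Complex.ext_iff]]
    rw [neg_smul]
  have hxB : x * B - B * x = (Complex.I * t) • C := by
    rw [hxdef, hCdef, Matrix.smul_mul, Matrix.mul_smul, smul_sub]
  have key := key_bound x B hx
  rw [hxB] at key
  set X : Matrix (Fin n) (Fin n) ℂ :=
    NormedSpace.exp x * B * NormedSpace.exp (-x) - B - (Complex.I * t) • C with hXdef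
  have htr : (NormedSpace.exp x * B * NormedSpace.exp (-x) * ρ).trace
      - (B * ρ).trace - (t : ℂ) * (Complex.I • C * ρ).trace = (X * ρ).trace := by
    rw [hXdef, sub_mul, sub_mul, Matrix.trace_sub, Matrix.trace_sub]
    congr 1
    rw [Matrix.smul_mul, Matrix.smul_mul, Matrix.trace_smul, Matrix.trace_smul,
      smul_eq_mul, smul_eq_mul]
    ring
  rw [htr]
  have hX := trace_bound X ρ hρ hρtr
  refine hX.trans (key.trans ?_)
  have hnx : ‖x‖ = |t| * ‖A‖ := by
    rw [hxdef, norm_smul]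
    congr 1
    simp
  have hnC : ‖(Complex.I * (t : ℂ)) • C‖ = |t| * ‖C‖ := by
    rw [norm_smul]
    congr 1
    simp
  rw [hnx, hnC]
  have hCpos : (0:ℝ) ≤ ‖C‖ := norm_nonneg _
  have hApos : (0:ℝ) ≤ ‖A‖ := norm_nonneg _
  have habs : (0:ℝ) ≤ |t| := abs_nonneg _
  have hsq : |t| * |t| = t ^ 2 := by rw [← sq_abs t]; ring
  have h1 : 2 * (|t| * ‖A‖) * (|t| * ‖C‖) ≤ 2 * (t ^ 2 * ‖C‖) := by
    nlinarith [mul_le_mul_of_nonneg_left (mul_le_mul_of_nonneg_right hAnorm hCpos)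
      (mul_nonneg habs habs)]
  have hexp : (2.7182818283 : ℝ) < Real.exp 1 := Real.exp_one_gt_d9
  have h2 : (2:ℝ) ≤ (Real.exp 1 ^ 2 - 3) / 2 := by nlinarith
  have h3 : (0:ℝ) ≤ t ^ 2 * ‖C‖ := by positivity
  nlinarith
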